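/- In the two-signal game specified in the context: (i) θ' ≿_{s''} θ''; and (ii) the pooling profile π* with π₁*(s'|θ') = π₁*(s'|θ'') = 1, π₂*(a'|s') = 1, π₂*(a''|s'') = 1 passes the Intuitive Criterion but is not a rationality-compatible equilibrium (RCE). -/

import Mathlib

open scoped Classical
open Finset Filter

noncomputable section

/-- `p` is a probability distribution on the finite type `X`. -/
def IsDist {X : Type*} [Fintype X] (p : X → ℝ) : Prop :=
  (∀ x, 0 ≤ p x) ∧ ∑ x, p x = 1

variable {Θ S A : Type*} [Fintype Θ] [Fintype S] [Fintype A]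

/-- Sender's expected payoff `u₁(θ, s, π₂(·|s))` from signal `s` when the receiver plays `π₂`. -/
def u1R (u₁ : Θ → S → A → ℝ) (π₂ : S → A → ℝ) (θ : Θ) (s : S) : ℝ :=
  ∑ a, π₂ s a * u₁ θ s a

/-- Receiver's expected payoff of action `a` after signal `s` under belief `p`. -/
def expU2 (u₂ : Θ → S → A → ℝ) (p : Θ → ℝ) (s : S) (a : A) : ℝ :=
  ∑ θ, p θ * u₂ θ s a

/-- `BR(p, s)`: pure best responses to belief `p` after signal `s`. -/
def BRb (u₂ : Θ → S → A → ℝ) (p : Θ → ℝ) (s : S) : Set A :=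
  {a | ∀ a', expU2 u₂ p s a' ≤ expU2 u₂ p s a}

/-- `A_s^BR`: actions that best respond to some belief after `s`. -/
def ABR (u₂ : Θ → S → A → ℝ) (s : S) : Set A :=
  {a | ∃ p, IsDist p ∧ a ∈ BRb u₂ p s}

/-- Membership in `Π₂•`: a receiver behavior strategy supported on `A_s^BR` after every `s`. -/
def Rational2 (u₂ : Θ → S → A → ℝ) (π₂ : S → A → ℝ) : Prop :=
  (∀ s, IsDist (π₂ s)) ∧ ∀ s a, π₂ s a ≠ 0 → a ∈ ABR u₂ s

/-- `u₁(θ,s,π₂(·|s)) ≥ max_{s' ≠ s} u₁(θ,s',π₂(·|s'))`. -/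
def WeakBest (u₁ : Θ → S → A → ℝ) (π₂ : S → A → ℝ) (θ : Θ) (s : S) : Prop :=
  ∀ s', s' ≠ s → u1R u₁ π₂ θ s' ≤ u1R u₁ π₂ θ s

/-- `u₁(θ,s,π₂(·|s)) > max_{s' ≠ s} u₁(θ,s',π₂(·|s'))`. -/
def StrictBest (u₁ : Θ → S → A → ℝ) (π₂ : S → A → ℝ) (θ : Θ) (s : S) : Prop :=
  ∀ s', s' ≠ s → u1R u₁ π₂ θ s' < u1R u₁ π₂ θ s

/-- `θ' ≿_s θ''`: `s` is more rationally-compatible with `θ'` than with `θ''`. -/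
def MoreCompat (u₁ u₂ : Θ → S → A → ℝ) (s : S) (θ' θ'' : Θ) : Prop :=
  ∀ π₂, Rational2 u₂ π₂ → WeakBest u₁ π₂ θ'' s → StrictBest u₁ π₂ θ' s

/-- `s` maximizes `s' ↦ u₁(θ, s', π₂(·|s'))`. -/
def GlobalBest (u₁ : Θ → S → A → ℝ) (π₂ : S → A → ℝ) (θ : Θ) (s : S) : Prop :=
  ∀ s', u1R u₁ π₂ θ s' ≤ u1R u₁ π₂ θ s

/-- `S_θ`: signals that best respond to some (not necessarily rational) receiver strategy. -/
def Sθ (u₁ : Θ → S → A → ℝ) (θ : Θ) : Set S :=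
  {s | ∃ π₂ : S → A → ℝ, (∀ s', IsDist (π₂ s')) ∧ GlobalBest u₁ π₂ θ s}

/-- `Θ_s`: types for which `s` is not dominated. -/
def Θtypes (u₁ : Θ → S → A → ℝ) (s : S) : Set Θ := {θ | s ∈ Sθ u₁ θ}

/-- Membership in `Π₁•`. -/
def Rational1 (u₁ : Θ → S → A → ℝ) (π₁ : Θ → S → ℝ) : Prop :=
  (∀ θ, IsDist (π₁ θ)) ∧ ∀ θ s, π₁ θ s ≠ 0 → s ∈ Sθ u₁ θ

/-- Nash equilibrium of the signaling game. -/
def NashEq (lam : Θ → ℝ) (u₁ u₂ : Θ → S → A → ℝ)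
    (π₁ : Θ → S → ℝ) (π₂ : S → A → ℝ) : Prop :=
  (∀ θ, IsDist (π₁ θ)) ∧ (∀ s, IsDist (π₂ s)) ∧
  (∀ θ s, π₁ θ s ≠ 0 → GlobalBest u₁ π₂ θ s) ∧
  (∀ s, (∃ θ, π₁ θ s ≠ 0) → ∀ a, π₂ s a ≠ 0 →
    ∀ a', ∑ θ, lam θ * π₁ θ s * u₂ θ s a' ≤ ∑ θ, lam θ * π₁ θ s * u₂ θ s a)

/-- Equilibrium expected payoff `E_π[u₁ | θ]`. -/
def eqPayoff (u₁ : Θ → S → A → ℝ) (π₁ : Θ → S → ℝ) (π₂ : S → A → ℝ) (θ : Θ) : ℝ :=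
  ∑ s, π₁ θ s * u1R u₁ π₂ θ s

/-- `s` is off the path of play of `π₁`. -/
def OffPath (π₁ : Θ → S → ℝ) (s : S) : Prop := ∀ θ, π₁ θ s = 0

/-- `J̃(s, π)`: types for which some best response to `s` weakly improves on the equilibrium. -/
def Jt (u₁ u₂ : Θ → S → A → ℝ) (π₁ : Θ → S → ℝ) (π₂ : S → A → ℝ) (s : S) : Set Θ :=
  {θ | ∃ a ∈ ABR u₂ s, eqPayoff u₁ π₁ π₂ θ ≤ u₁ θ s a}

/-- The odds-ratio condition defining `P_{θ'▷θ''}`. -/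
def OddsLe (lam : Θ → ℝ) (θ' θ'' : Θ) (p : Θ → ℝ) : Prop :=
  p θ'' * lam θ' ≤ lam θ'' * p θ'

/-- `Δ(T)`: beliefs supported on `T`. -/
def DeltaOn {Θ : Type*} [Fintype Θ] (T : Set Θ) : Set (Θ → ℝ) :=
  {p | IsDist p ∧ ∀ θ ∉ T, p θ = 0}

/-- `P̃(s, π)`: rationality-compatible beliefs at profile `π`. -/
def Pt (lam : Θ → ℝ) (u₁ u₂ : Θ → S → A → ℝ) (π₁ : Θ → S → ℝ) (π₂ : S → A → ℝ)
    (s : S) : Set (Θ → ℝ) :=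
  if (Jt u₁ u₂ π₁ π₂ s).Nonempty then
    DeltaOn (Jt u₁ u₂ π₁ π₂ s) ∩
      {p | ∀ θ' θ'', MoreCompat u₁ u₂ s θ' θ'' → OddsLe lam θ' θ'' p}
  else DeltaOn (Θtypes u₁ s)

/-- Rationality-compatible equilibrium. -/
def RCE (lam : Θ → ℝ) (u₁ u₂ : Θ → S → A → ℝ)
    (π₁ : Θ → S → ℝ) (π₂ : S → A → ℝ) : Prop :=
  NashEq lam u₁ u₂ π₁ π₂ ∧
  ∀ s a, π₂ s a ≠ 0 → ∃ p ∈ Pt lam u₁ u₂ π₁ π₂ s, a ∈ BRb u₂ p s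

/-- `P̂(s)`: uniformly rationality-compatible beliefs. -/
def Ph (lam : Θ → ℝ) (u₁ u₂ : Θ → S → A → ℝ) (s : S) : Set (Θ → ℝ) :=
  DeltaOn (Θtypes u₁ s) ∩
    {p | ∀ θ' θ'', MoreCompat u₁ u₂ s θ' θ'' → OddsLe lam θ' θ'' p}

/-- Uniform rationality-compatible equilibrium. -/
def URCE (lam : Θ → ℝ) (u₁ u₂ : Θ → S → A → ℝ)
    (π₁ : Θ → S → ℝ) (π₂ : S → A → ℝ) : Prop :=
  NashEq lam u₁ u₂ π₁ π₂ ∧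
  ∀ θ s, OffPath π₁ s → ∀ a, (∃ p ∈ Ph lam u₁ u₂ s, a ∈ BRb u₂ p s) →
    u₁ θ s a ≤ eqPayoff u₁ π₁ π₂ θ

/-- Receiver's expected payoff of a mixed action `α` after `s` under belief `p`. -/
def expU2m (u₂ : Θ → S → A → ℝ) (p : Θ → ℝ) (s : S) (α : A → ℝ) : ℝ :=
  ∑ θ, p θ * ∑ a, α a * u₂ θ s a

/-- `MBR(p, s)`: mixed best responses to belief `p` after `s`. -/
def MBRb (u₂ : Θ → S → A → ℝ) (p : Θ → ℝ) (s : S) : Set (A → ℝ) :=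
  {α | IsDist α ∧ ∀ α', IsDist α' → expU2m u₂ p s α' ≤ expU2m u₂ p s α}

/-- `MBR(s)`. -/
def MBR (u₂ : Θ → S → A → ℝ) (s : S) : Set (A → ℝ) :=
  {α | ∃ p, IsDist p ∧ α ∈ MBRb u₂ p s}

/-- `u₁(θ, s, α)` for a mixed action `α`. -/
def u1m (u₁ : Θ → S → A → ℝ) (θ : Θ) (s : S) (α : A → ℝ) : ℝ :=
  ∑ a, α a * u₁ θ s a

/-- `D(θ, s; π)`. -/
def Dset (u₁ u₂ : Θ → S → A → ℝ) (π₁ : Θ → S → ℝ) (π₂ : S → A → ℝ)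
    (θ : Θ) (s : S) : Set (A → ℝ) :=
  {α | α ∈ MBR u₂ s ∧ eqPayoff u₁ π₁ π₂ θ < u1m u₁ θ s α}

/-- `D°(θ, s; π)`. -/
def D0set (u₁ u₂ : Θ → S → A → ℝ) (π₁ : Θ → S → ℝ) (π₂ : S → A → ℝ)
    (θ : Θ) (s : S) : Set (A → ℝ) :=
  {α | α ∈ MBR u₂ s ∧ eqPayoff u₁ π₁ π₂ θ = u1m u₁ θ s α}

/-! ### The two-signal game (Example: IC but not RCE) -/

/-- Sender types: `t1 = θ'`, `t2 = θ''`. -/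
inductive Ty | t1 | t2
deriving DecidableEq

instance : Fintype Ty :=
  ⟨{Ty.t1, Ty.t2}, fun x => by cases x <;> simp⟩

/-- Signals: `s1 = s'`, `s2 = s''`. -/
inductive Sg | s1 | s2
deriving DecidableEq

instance : Fintype Sg :=
  ⟨{Sg.s1, Sg.s2}, fun x => by cases x <;> simp⟩

/-- Receiver actions: `a1 = a'`, `a2 = a''`. -/
inductive Ac | a1 | a2
deriving DecidableEq

instance : Fintype Ac :=
  ⟨{Ac.a1, Ac.a2}, fun x => by cases x <;> simp⟩

/-- Prior: `λ(θ') = 3/4`, `λ(θ'') = 1/4`. -/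
def lamG : Ty → ℝ
  | .t1 => 3 / 4
  | .t2 => 1 / 4

/-- Sender payoffs. -/
def u1G : Ty → Sg → Ac → ℝ
  | .t1, .s1, .a1 => 4
  | .t1, .s1, .a2 => 0
  | .t2, .s1, .a1 => 6
  | .t2, .s1, .a2 => 2
  | .t1, .s2, .a1 => 7
  | .t1, .s2, .a2 => 3
  | .t2, .s2, .a1 => 7
  | .t2, .s2, .a2 => 3

/-- Receiver payoffs. -/
def u2G : Ty → Sg → Ac → ℝ
  | .t1, .s1, .a1 => 1
  | .t1, .s1, .a2 => 0
  | .t2, .s1, .a1 => 0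
  | .t2, .s1, .a2 => 1
  | .t1, .s2, .a1 => 1
  | .t1, .s2, .a2 => 0
  | .t2, .s2, .a1 => 0
  | .t2, .s2, .a2 => 1

/-- The pooling-on-`s'` profile: both types send `s'`; the receiver plays `a'` after `s'`
and `a''` after `s''`. -/
def pi1G : Ty → Sg → ℝ := fun _ s => if s = Sg.s1 then 1 else 0

def pi2G : Sg → Ac → ℝ
  | .s1, .a1 => 1
  | .s2, .a2 => 1
  | _, _ => 0

/-- `π` passes the Intuitive Criterion. -/
def PassesIC {Θ S A : Type*} [Fintype Θ] [Fintype S] [Fintype A]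
    (u₁ u₂ : Θ → S → A → ℝ) (π₁ : Θ → S → ℝ) (π₂ : S → A → ℝ) : Prop :=
  ¬ ∃ (θ : Θ) (s' : S), (Jt u₁ u₂ π₁ π₂ s').Nonempty ∧
    ∀ a : A, (∃ p ∈ DeltaOn (Jt u₁ u₂ π₁ π₂ s'), a ∈ BRb u₂ p s') →
      eqPayoff u₁ π₁ π₂ θ < u₁ θ s' a

/-! ### Auxiliary lemmas for the proof -/

lemma sumTy (f : Ty → ℝ) : ∑ x, f x = f .t1 + f .t2 := by
  show ∑ x ∈ Finset.univ, f x = _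
  rw [show (Finset.univ : Finset Ty) = {Ty.t1, Ty.t2} by rfl]
  simp [Finset.sum_pair]

lemma sumSg (f : Sg → ℝ) : ∑ x, f x = f .s1 + f .s2 := by
  show ∑ x ∈ Finset.univ, f x = _
  rw [show (Finset.univ : Finset Sg) = {Sg.s1, Sg.s2} by rfl]
  simp [Finset.sum_pair]

lemma sumAc (f : Ac → ℝ) : ∑ x, f x = f .a1 + f .a2 := by
  show ∑ x ∈ Finset.univ, f x = _
  rw [show (Finset.univ : Finset Ac) = {Ac.a1, Ac.a2} by rfl]
  simp [Finset.sum_pair]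

/-- The point mass on `t1`. -/
def d1 : Ty → ℝ := fun t => if t = Ty.t1 then 1 else 0

/-- The point mass on `t2`. -/
def d2 : Ty → ℝ := fun t => if t = Ty.t2 then 1 else 0

lemma d1_dist : IsDist d1 := by
  constructor
  · intro x; cases x <;> simp [d1]
  · rw [sumTy]; simp [d1]

lemma d2_dist : IsDist d2 := by
  constructor
  · intro x; cases x <;> simp [d2]
  · rw [sumTy]; simp [d2]

/-- `a1` best responds after any signal to the point mass on `t1`. -/
lemma a1_ABR (s : Sg) : Ac.a1 ∈ ABR u2G s := by
  refine ⟨d1, d1_dist, ?_⟩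
  intro a'
  cases a' <;> cases s <;> simp [expU2, sumTy, d1, u2G]

/-- `a2` best responds after any signal to the point mass on `t2`. -/
lemma a2_ABR (s : Sg) : Ac.a2 ∈ ABR u2G s := by
  refine ⟨d2, d2_dist, ?_⟩
  intro a'
  cases a' <;> cases s <;> simp [expU2, sumTy, d2, u2G]

lemma eqPayoff_t1 : eqPayoff u1G pi1G pi2G Ty.t1 = 4 := by
  unfold eqPayoff u1R
  rw [sumSg, sumAc, sumAc]
  simp [pi1G, pi2G, u1G]

lemma eqPayoff_t2 : eqPayoff u1G pi1G pi2G Ty.t2 = 6 := by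
  unfold eqPayoff u1R
  rw [sumSg, sumAc, sumAc]
  simp [pi1G, pi2G, u1G]

/-- `t2 ∈ J̃(s, π*)` for every signal `s`. -/
lemma t2_in_Jt (s : Sg) : Ty.t2 ∈ Jt u1G u2G pi1G pi2G s := by
  refine ⟨Ac.a1, a1_ABR s, ?_⟩
  rw [eqPayoff_t2]
  cases s <;> norm_num [u1G]

/-- Part (i): `θ' ≿_{s''} θ''`. -/
lemma moreCompat_s2 : MoreCompat u1G u2G Sg.s2 Ty.t1 Ty.t2 := by
  intro π₂ hrat hweak s' hs'
  have hs1 : s' = Sg.s1 := by cases s' <;> simp_all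
  subst hs1
  have hw := hweak Sg.s1 (by simp)
  have hd := (hrat.1 Sg.s1)
  have hsum : π₂ Sg.s1 Ac.a1 + π₂ Sg.s1 Ac.a2 = 1 := by
    have := hd.2; rwa [sumAc] at this
  have h2eq : u1R u1G π₂ Ty.t2 Sg.s2 = u1R u1G π₂ Ty.t1 Sg.s2 := by
    unfold u1R; rw [sumAc, sumAc]; simp [u1G]
  have h1 : u1R u1G π₂ Ty.t1 Sg.s1 = 4 * π₂ Sg.s1 Ac.a1 := by
    unfold u1R; rw [sumAc]; simp [u1G]; ring
  have h2 : u1R u1G π₂ Ty.t2 Sg.s1 =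
      6 * π₂ Sg.s1 Ac.a1 + 2 * π₂ Sg.s1 Ac.a2 := by
    unfold u1R; rw [sumAc]; simp [u1G]; ring
  have hpos1 := hd.1 Ac.a1
  have hpos2 := hd.1 Ac.a2
  rw [h1, ← h2eq]
  rw [h2] at hw
  linarith

/-- in the two-signal game, (i) `θ' ≿_{s''} θ''`, and (ii) the pooling
profile passes the Intuitive Criterion but is not an RCE. -/
theorem IC_but_not_RCE :
    MoreCompat u1G u2G Sg.s2 Ty.t1 Ty.t2 ∧
    PassesIC u1G u2G pi1G pi2G ∧
    ¬ RCE lamG u1G u2G pi1G pi2G := by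
  refine ⟨moreCompat_s2, ?_, ?_⟩
  · -- Passes the Intuitive Criterion
    rintro ⟨θ, s, hJ, hall⟩
    have hmem : ∃ p ∈ DeltaOn (Jt u1G u2G pi1G pi2G s), Ac.a2 ∈ BRb u2G p s := by
      refine ⟨d2, ⟨d2_dist, ?_⟩, ?_⟩
      · intro t ht
        cases t
        · simp [d2]
        · exact absurd (t2_in_Jt s) ht
      · intro a'
        cases a' <;> cases s <;> simp [expU2, sumTy, d2, u2G]
    have := hall Ac.a2 hmem
    cases θ <;> cases s <;>
      simp only [eqPayoff_t1, eqPayoff_t2] at this <;>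
      norm_num [u1G] at this
  · -- Not an RCE
    rintro ⟨hNash, hbel⟩
    obtain ⟨p, hp, hbr⟩ := hbel Sg.s2 Ac.a2 (by norm_num [pi2G])
    rw [Pt, if_pos ⟨Ty.t2, t2_in_Jt Sg.s2⟩] at hp
    obtain ⟨⟨hpd, -⟩, hodds⟩ := hp
    have hOdds : OddsLe lamG Ty.t1 Ty.t2 p := hodds Ty.t1 Ty.t2 moreCompat_s2
    unfold OddsLe lamG at hOdds
    norm_num at hOdds
    have hb := hbr Ac.a1
    unfold expU2 at hb
    rw [sumTy, sumTy] at hb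
    norm_num [u2G] at hb
    have h1 := hpd.1 Ty.t1
    have h2 := hpd.1 Ty.t2
    have hs : p Ty.t1 + p Ty.t2 = 1 := by have := hpd.2; rwa [sumTy] at this
    linarith


end
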